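/- If r = 0 (no reinfection) and R₀ = βλ/(μ(σ+μ)) > 1, then the SIQR system admits an equilibrium with I* = μ(R₀ - 1)/β > 0, S* = (σ+μ)/β, Q* = σI*/(θ+μ), and R* = θQ*/μ, and all four coordinates are positive. -/

import Mathlib

/-- With no reinfection (r = 0) and R₀ > 1, the SIQR system has a positive
endemic equilibrium with the stated coordinates. -/
theorem stmt_17 (lam β μ σ θ : ℝ)
    (hlam : 0 < lam) (hβ : 0 < β) (hμ : 0 < μ) (hσ : 0 < σ) (hθ : 0 < θ)
    (R0 : ℝ) (hR0def : R0 = β * lam / (μ * (σ + μ))) (hR0 : 1 < R0)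
    (Istar Sstar Qstar Rstar : ℝ)
    (hIs : Istar = μ * (R0 - 1) / β)
    (hSs : Sstar = (σ + μ) / β)
    (hQs : Qstar = σ * Istar / (θ + μ))
    (hRs : Rstar = θ * Qstar / μ) :
    (0 < Sstar ∧ 0 < Istar ∧ 0 < Qstar ∧ 0 < Rstar) ∧
    (lam - β * Sstar * Istar - μ * Sstar = 0) ∧
    (β * Sstar * Istar - σ * Istar - μ * Istar = 0) ∧
    (σ * Istar - θ * Qstar - μ * Qstar = 0) ∧
    (θ * Qstar - μ * Rstar = 0) := by
  have hβ' := hβ.ne'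
  have hμ' := hμ.ne'
  have hσμ : (0:ℝ) < σ + μ := by linarith
  have hθμ : (0:ℝ) < θ + μ := by linarith
  have hI : 0 < Istar := by
    rw [hIs]
    have : 0 < R0 - 1 := by linarith
    positivity
  have hQ : 0 < Qstar := by rw [hQs]; positivity
  refine ⟨⟨by rw [hSs]; positivity, hI, hQ, by rw [hRs]; positivity⟩, ?_, ?_, ?_, ?_⟩
  · rw [hSs, hIs, hR0def]; field_simp; ring
  · rw [hSs]; field_simp; ring
  · rw [hQs]; field_simp; ring
  · rw [hRs]; field_simp; ring
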